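/- Let X and Y be independent Geometric(p) random variables (on {1,2,...}) and let Z := X − Y. Let W be defined from Z by: W = Z if Z is odd; if Z is even, W = Z+1 or W = Z−1 each with probability 1/2 (independently of Z). Then for every integer k ≥ 0, P(|W| + 1 = 2(k+1)) = (1−p)^{2k} (1 − (1−p)^2); i.e. (|W|+1)/2 is Geometric with parameter 1−(1−p)^2. -/
import Mathlib

open MeasureTheory ProbabilityTheory

lemma geo_diff {Ω : Type*} [MeasurableSpace Ω] (P : Measure Ω) [IsProbabilityMeasure P]
    (p : ℝ) (hp : 0 < p) (hp1 : p < 1)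
    (X Y : Ω → ℤ) (hXm : Measurable X) (hYm : Measurable Y)
    (hX : ∀ j : ℕ, P {ω | X ω = (j : ℤ) + 1} = ENNReal.ofReal ((1 - p) ^ j * p))
    (hY : ∀ j : ℕ, P {ω | Y ω = (j : ℤ) + 1} = ENNReal.ofReal ((1 - p) ^ j * p))
    (hXpos : ∀ᵐ ω ∂P, 1 ≤ X ω) (hYpos : ∀ᵐ ω ∂P, 1 ≤ Y ω)
    (hindepXY : IndepFun X Y P) (m : ℕ) :
    P {ω | X ω - Y ω = (m : ℤ)} =
      ENNReal.ofReal (p ^ 2 * (1 - p) ^ m / (1 - (1 - p) ^ 2)) := by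
  have hq0 : 0 < 1 - p := by linarith
  have hq1 : 1 - p < 1 := by linarith
  have hae : {ω | X ω - Y ω = (m : ℤ)} =ᵐ[P]
      ⋃ j : ℕ, ({ω | X ω = ((m + j : ℕ) : ℤ) + 1} ∩ {ω | Y ω = (j : ℤ) + 1}) := by
    rw [Filter.eventuallyEq_set]
    filter_upwards [hXpos, hYpos] with ω hx hy
    simp only [Set.mem_setOf_eq, Set.mem_iUnion, Set.mem_inter_iff]
    constructor
    · intro h
      exact ⟨(Y ω - 1).toNat, by omega, by omega⟩
    · rintro ⟨j, hj1, hj2⟩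
      omega
  rw [measure_congr hae]
  have hdisj : Pairwise (Function.onFun Disjoint
      fun j : ℕ => ({ω | X ω = ((m + j : ℕ) : ℤ) + 1} ∩ {ω | Y ω = (j : ℤ) + 1})) := by
    intro i j hij
    refine Set.disjoint_left.2 ?_
    rintro ω ⟨-, h1⟩ ⟨-, h2⟩
    simp only [Set.mem_setOf_eq] at h1 h2
    omega
  have hmeas : ∀ j : ℕ, MeasurableSet
      ({ω | X ω = ((m + j : ℕ) : ℤ) + 1} ∩ {ω | Y ω = (j : ℤ) + 1}) := by
    intro j
    exact (hXm (measurableSet_singleton _)).inter (hYm (measurableSet_singleton _))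
  rw [measure_iUnion hdisj hmeas]
  have hterm : ∀ j : ℕ,
      P ({ω | X ω = ((m + j : ℕ) : ℤ) + 1} ∩ {ω | Y ω = (j : ℤ) + 1}) =
        ENNReal.ofReal ((p ^ 2 * (1 - p) ^ m) * ((1 - p) ^ 2) ^ j) := by
    intro j
    have := hindepXY.measure_inter_preimage_eq_mul {((m + j : ℕ) : ℤ) + 1} {(j : ℤ) + 1}
      (measurableSet_singleton _) (measurableSet_singleton _)
    simp only [Set.preimage, Set.mem_singleton_iff] at this
    rw [this, hX (m + j), hY j, ← ENNReal.ofReal_mul (by positivity)]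
    congr 1
    rw [← pow_mul]
    ring
  simp_rw [hterm]
  rw [← ENNReal.ofReal_tsum_of_nonneg (fun j => by positivity)
    ((summable_geometric_of_lt_one (by positivity) (by nlinarith)).mul_left _)]
  congr 1
  rw [tsum_mul_left, tsum_geometric_of_lt_one (by positivity) (by nlinarith)]
  field_simp

/-- Let `Z = X − Y` with `X, Y` independent Geometric(p) on `{1,2,...}` and let `W = Z` if `Z`
is odd, and `W = Z ± 1` with probability 1/2 each (independent fair tiebreaker `ξ`) if `Z` is
even.  Then for every `k ≥ 0`,
`P(|W| + 1 = 2(k+1)) = (1−p)^{2k}(1 − (1−p)²)`, i.e. `(|W|+1)/2` is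
Geometric(1−(1−p)²). -/
theorem stmt1 {Ω : Type*} [MeasurableSpace Ω] (P : Measure Ω) [IsProbabilityMeasure P]
    (p : ℝ) (hp : 0 < p) (hp1 : p < 1)
    (X Y : Ω → ℤ) (hXm : Measurable X) (hYm : Measurable Y)
    (hX : ∀ j : ℕ, P {ω | X ω = (j : ℤ) + 1} = ENNReal.ofReal ((1 - p) ^ j * p))
    (hY : ∀ j : ℕ, P {ω | Y ω = (j : ℤ) + 1} = ENNReal.ofReal ((1 - p) ^ j * p))
    (hXpos : ∀ᵐ ω ∂P, 1 ≤ X ω) (hYpos : ∀ᵐ ω ∂P, 1 ≤ Y ω)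
    (hindepXY : IndepFun X Y P)
    (ξ : Ω → Bool) (hξm : Measurable ξ)
    (hξ : P {ω | ξ ω = true} = 1 / 2)
    (hindepξ : IndepFun (fun ω => (X ω, Y ω)) ξ P)
    (W : Ω → ℤ)
    (hW : ∀ ω, W ω =
      if Odd (X ω - Y ω) then X ω - Y ω
      else if ξ ω then X ω - Y ω - 1 else X ω - Y ω + 1) :
    ∀ k : ℕ,
      P {ω | |W ω| + 1 = 2 * ((k : ℤ) + 1)} =
        ENNReal.ofReal ((1 - p) ^ (2 * k) * (1 - (1 - p) ^ 2)) := by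
  intro k
  have hq0 : 0 < 1 - p := by linarith
  have hq1 : 1 - p < 1 := by linarith
  have hden : (0:ℝ) < 1 - (1 - p) ^ 2 := by nlinarith
  have hE : ∀ m : ℕ, 0 ≤ p ^ 2 * (1 - p) ^ m / (1 - (1 - p) ^ 2) := fun m =>
    div_nonneg (by positivity) hden.le
  have hE2 : ∀ m : ℕ, 0 ≤ p ^ 2 * (1 - p) ^ m / (1 - (1 - p) ^ 2) * (1 / 2) := fun m =>
    mul_nonneg (hE m) (by norm_num)
  have hpos : ∀ m : ℕ, P {ω | X ω - Y ω = (m : ℤ)} =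
      ENNReal.ofReal (p ^ 2 * (1 - p) ^ m / (1 - (1 - p) ^ 2)) :=
    geo_diff P p hp hp1 X Y hXm hYm hX hY hXpos hYpos hindepXY
  have hneg : ∀ m : ℕ, P {ω | X ω - Y ω = -(m : ℤ)} =
      ENNReal.ofReal (p ^ 2 * (1 - p) ^ m / (1 - (1 - p) ^ 2)) := by
    intro m
    have hs : {ω | X ω - Y ω = -(m : ℤ)} = {ω | Y ω - X ω = (m : ℤ)} := by
      ext ω; simp only [Set.mem_setOf_eq]; omega
    rw [hs]
    exact geo_diff P p hp hp1 Y X hYm hXm hY hX hYpos hXpos hindepXY.symm m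
  have hhalf : ∀ b : Bool, P {ω | ξ ω = b} = 1 / 2 := by
    intro b
    cases b
    · have hc : {ω | ξ ω = false} = {ω | ξ ω = true}ᶜ := by ext ω; simp
      have hms : MeasurableSet {ω | ξ ω = true} := hξm (measurableSet_singleton true)
      rw [hc, measure_compl hms (measure_ne_top _ _), measure_univ, hξ]
      exact ENNReal.sub_half ENNReal.one_ne_top
    · exact hξ
  set D : ℤ → Bool → Set Ω := fun m b => {ω | X ω - Y ω = m ∧ ξ ω = b} with hD
  have hDval : ∀ (m : ℤ) (b : Bool),
      P (D m b) = P {ω | X ω - Y ω = m} * (1 / 2) := by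
    intro m b
    have hs : MeasurableSet {q : ℤ × ℤ | q.1 - q.2 = m} :=
      (measurable_fst.sub measurable_snd) (measurableSet_singleton m)
    have h := hindepξ.measure_inter_preimage_eq_mul
      (s := {q : ℤ × ℤ | q.1 - q.2 = m}) (t := {b}) hs (measurableSet_singleton b)
    have h1 : (fun ω => (X ω, Y ω)) ⁻¹' {q : ℤ × ℤ | q.1 - q.2 = m} =
        {ω | X ω - Y ω = m} := rfl
    have h2 : ξ ⁻¹' {b} = {ω | ξ ω = b} := rfl
    rw [h1, h2] at h
    have h3 : D m b = {ω | X ω - Y ω = m} ∩ {ω | ξ ω = b} := rfl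
    rw [h3, h, hhalf b]
  have hDmeas : ∀ (m : ℤ) (b : Bool), MeasurableSet (D m b) := fun m b =>
    ((hXm.sub hYm) (measurableSet_singleton m)).inter (hξm (measurableSet_singleton b))
  have hDdisj : ∀ (m m' : ℤ) (b b' : Bool), (m ≠ m' ∨ b ≠ b') →
      Disjoint (D m b) (D m' b') := by
    intro m m' b b' h
    refine Set.disjoint_left.2 ?_
    rintro ω ⟨h1, h2⟩ ⟨h3, h4⟩
    rcases h with h | h
    · omega
    · exact h (h2.symm.trans h4)
  have htf : (true : Bool) ≠ false := by decide
  have hft : (false : Bool) ≠ true := by decide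
  have hEq : {ω | |W ω| + 1 = 2 * ((k : ℤ) + 1)} =
      D ((2*k+1 : ℕ) : ℤ) true ∪ (D ((2*k+1 : ℕ) : ℤ) false ∪ (D ((2*k+2 : ℕ) : ℤ) true ∪
      (D ((2*k : ℕ) : ℤ) false ∪ (D (-((2*k+1 : ℕ) : ℤ)) true ∪ (D (-((2*k+1 : ℕ) : ℤ)) false ∪
      (D (-((2*k+2 : ℕ) : ℤ)) false ∪ D (-((2*k : ℕ) : ℤ)) true)))))) := by
    ext ω
    simp only [hD, Set.mem_union, Set.mem_setOf_eq]
    rw [hW ω]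
    cases hb : ξ ω <;>
      simp only [Bool.false_eq_true, Bool.true_eq_false, and_true, and_false, false_and,
        or_false, false_or, if_false, if_true, ite_true, ite_false] <;>
      split_ifs with ho <;>
      simp only [Int.odd_iff, Int.not_odd_iff] at ho <;>
      rw [Int.abs_eq_natAbs] <;>
      omega
  have m8 : MeasurableSet (D (-((2*k : ℕ) : ℤ)) true) := hDmeas _ _
  have m78 : MeasurableSet (D (-((2*k+2 : ℕ) : ℤ)) false ∪ D (-((2*k : ℕ) : ℤ)) true) :=
    (hDmeas _ _).union m8
  have m678 := (hDmeas (-((2*k+1 : ℕ) : ℤ)) false).union m78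
  have m5678 := (hDmeas (-((2*k+1 : ℕ) : ℤ)) true).union m678
  have m45678 := (hDmeas ((2*k : ℕ) : ℤ) false).union m5678
  have m345678 := (hDmeas ((2*k+2 : ℕ) : ℤ) true).union m45678
  have m2345678 := (hDmeas ((2*k+1 : ℕ) : ℤ) false).union m345678
  have d1 := Set.disjoint_union_right.2 ⟨hDdisj ((2*k+1 : ℕ) : ℤ) ((2*k+1 : ℕ) : ℤ) true false (Or.inr htf),
    Set.disjoint_union_right.2 ⟨hDdisj ((2*k+1 : ℕ) : ℤ) ((2*k+2 : ℕ) : ℤ) true true (Or.inl (by omega)),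
    Set.disjoint_union_right.2 ⟨hDdisj ((2*k+1 : ℕ) : ℤ) ((2*k : ℕ) : ℤ) true false (Or.inl (by omega)),
    Set.disjoint_union_right.2 ⟨hDdisj ((2*k+1 : ℕ) : ℤ) (-((2*k+1 : ℕ) : ℤ)) true true (Or.inl (by omega)),
    Set.disjoint_union_right.2 ⟨hDdisj ((2*k+1 : ℕ) : ℤ) (-((2*k+1 : ℕ) : ℤ)) true false (Or.inl (by omega)),
    Set.disjoint_union_right.2 ⟨hDdisj ((2*k+1 : ℕ) : ℤ) (-((2*k+2 : ℕ) : ℤ)) true false (Or.inl (by omega)),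
    hDdisj ((2*k+1 : ℕ) : ℤ) (-((2*k : ℕ) : ℤ)) true true (Or.inl (by omega))⟩⟩⟩⟩⟩⟩
  have d2 := Set.disjoint_union_right.2 ⟨hDdisj ((2*k+1 : ℕ) : ℤ) ((2*k+2 : ℕ) : ℤ) false true (Or.inl (by omega)),
    Set.disjoint_union_right.2 ⟨hDdisj ((2*k+1 : ℕ) : ℤ) ((2*k : ℕ) : ℤ) false false (Or.inl (by omega)),
    Set.disjoint_union_right.2 ⟨hDdisj ((2*k+1 : ℕ) : ℤ) (-((2*k+1 : ℕ) : ℤ)) false true (Or.inl (by omega)),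
    Set.disjoint_union_right.2 ⟨hDdisj ((2*k+1 : ℕ) : ℤ) (-((2*k+1 : ℕ) : ℤ)) false false (Or.inl (by omega)),
    Set.disjoint_union_right.2 ⟨hDdisj ((2*k+1 : ℕ) : ℤ) (-((2*k+2 : ℕ) : ℤ)) false false (Or.inl (by omega)),
    hDdisj ((2*k+1 : ℕ) : ℤ) (-((2*k : ℕ) : ℤ)) false true (Or.inl (by omega))⟩⟩⟩⟩⟩
  have d3 := Set.disjoint_union_right.2 ⟨hDdisj ((2*k+2 : ℕ) : ℤ) ((2*k : ℕ) : ℤ) true false (Or.inl (by omega)),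
    Set.disjoint_union_right.2 ⟨hDdisj ((2*k+2 : ℕ) : ℤ) (-((2*k+1 : ℕ) : ℤ)) true true (Or.inl (by omega)),
    Set.disjoint_union_right.2 ⟨hDdisj ((2*k+2 : ℕ) : ℤ) (-((2*k+1 : ℕ) : ℤ)) true false (Or.inl (by omega)),
    Set.disjoint_union_right.2 ⟨hDdisj ((2*k+2 : ℕ) : ℤ) (-((2*k+2 : ℕ) : ℤ)) true false (Or.inl (by omega)),
    hDdisj ((2*k+2 : ℕ) : ℤ) (-((2*k : ℕ) : ℤ)) true true (Or.inl (by omega))⟩⟩⟩⟩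
  have d4 := Set.disjoint_union_right.2 ⟨hDdisj ((2*k : ℕ) : ℤ) (-((2*k+1 : ℕ) : ℤ)) false true (Or.inl (by omega)),
    Set.disjoint_union_right.2 ⟨hDdisj ((2*k : ℕ) : ℤ) (-((2*k+1 : ℕ) : ℤ)) false false (Or.inl (by omega)),
    Set.disjoint_union_right.2 ⟨hDdisj ((2*k : ℕ) : ℤ) (-((2*k+2 : ℕ) : ℤ)) false false (Or.inl (by omega)),
    hDdisj ((2*k : ℕ) : ℤ) (-((2*k : ℕ) : ℤ)) false true (Or.inr hft)⟩⟩⟩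
  have d5 := Set.disjoint_union_right.2 ⟨hDdisj (-((2*k+1 : ℕ) : ℤ)) (-((2*k+1 : ℕ) : ℤ)) true false (Or.inr htf),
    Set.disjoint_union_right.2 ⟨hDdisj (-((2*k+1 : ℕ) : ℤ)) (-((2*k+2 : ℕ) : ℤ)) true false (Or.inl (by omega)),
    hDdisj (-((2*k+1 : ℕ) : ℤ)) (-((2*k : ℕ) : ℤ)) true true (Or.inl (by omega))⟩⟩
  have d6 := Set.disjoint_union_right.2 ⟨hDdisj (-((2*k+1 : ℕ) : ℤ)) (-((2*k+2 : ℕ) : ℤ)) false false (Or.inl (by omega)),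
    hDdisj (-((2*k+1 : ℕ) : ℤ)) (-((2*k : ℕ) : ℤ)) false true (Or.inl (by omega))⟩
  have d7 := hDdisj (-((2*k+2 : ℕ) : ℤ)) (-((2*k : ℕ) : ℤ)) false true (Or.inl (by omega))
  rw [hEq, measure_union d1 m2345678, measure_union d2 m345678, measure_union d3 m45678,
    measure_union d4 m5678, measure_union d5 m678, measure_union d6 m78, measure_union d7 m8]
  rw [hDval, hDval, hDval, hDval, hDval, hDval, hDval, hDval]
  rw [hpos (2*k+1), hpos (2*k+2), hpos (2*k), hneg (2*k+1), hneg (2*k+2), hneg (2*k)]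
  have h12 : ENNReal.ofReal (1/2 : ℝ) = 1/2 := by
    rw [ENNReal.ofReal_div_of_pos (by norm_num), ENNReal.ofReal_one, ENNReal.ofReal_ofNat]
  rw [← h12]
  rw [← ENNReal.ofReal_mul (hE _), ← ENNReal.ofReal_mul (hE _), ← ENNReal.ofReal_mul (hE _)]
  rw [← ENNReal.ofReal_add (hE2 _) (hE2 _),
    ← ENNReal.ofReal_add (hE2 _) (add_nonneg (hE2 _) (hE2 _)),
    ← ENNReal.ofReal_add (hE2 _) (add_nonneg (hE2 _) (add_nonneg (hE2 _) (hE2 _))),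
    ← ENNReal.ofReal_add (hE2 _)
      (add_nonneg (hE2 _) (add_nonneg (hE2 _) (add_nonneg (hE2 _) (hE2 _)))),
    ← ENNReal.ofReal_add (hE2 _) (add_nonneg (hE2 _)
      (add_nonneg (hE2 _) (add_nonneg (hE2 _) (add_nonneg (hE2 _) (hE2 _))))),
    ← ENNReal.ofReal_add (hE2 _) (add_nonneg (hE2 _) (add_nonneg (hE2 _)
      (add_nonneg (hE2 _) (add_nonneg (hE2 _) (add_nonneg (hE2 _) (hE2 _)))))),
    ← ENNReal.ofReal_add (hE2 _) (add_nonneg (hE2 _) (add_nonneg (hE2 _) (add_nonneg (hE2 _)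
      (add_nonneg (hE2 _) (add_nonneg (hE2 _) (add_nonneg (hE2 _) (hE2 _)))))))]
  congr 1
  have hne : (1 - (1 - p) ^ 2) ≠ 0 := ne_of_gt hden
  field_simp
  ring
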